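/- For t = 0,1,2,3 let A_t ∈ ℝ^{m×n} and B_t ∈ ℝ^{m×d} be the components of reduced biquaternion matrices A and B, and let C = [A₀; A₁; A₂; A₃] ∈ ℝ^{4m×n} and D = [B₀; B₁; B₂; B₃] ∈ ℝ^{4m×d} be their vertical stackings. Then a real matrix X ∈ ℝ^{n×d} is an RBTLS solution — i.e., there exist real quadruples E_t ∈ ℝ^{m×n} and G_t ∈ ℝ^{m×d} (the components of reduced biquaternion perturbations Ê, Ĝ) attaining the minimum of (Σ_t ‖E_t‖_F² + Σ_t ‖G_t‖_F²)^{1/2} over all quadruples admitting a common real solution X′ of the four component equations (A_t + E_t) X′ = B_t + G_t, and such that these four equations hold with X — if and only if X is a real TLS solution, i.e., there exist Ẽ ∈ ℝ^{4m×n}, G̃ ∈ ℝ^{4m×d} attaining the minimum of ‖[Ẽ, G̃]‖_F subject to the existence of a real solution of (C + Ẽ) X′ = D + G̃, and such that (C + Ẽ) X = D + G̃. Moreover, the correspondence Ẽ = [E₀; E₁; E₂; E₃], G̃ = [G₀; G₁; G₂; G₃] preserves feasibility and the objective value: ‖[Ê, Ĝ]‖_F = ‖[Ẽ, G̃]‖_F.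 -/

import Mathlib

open Matrix

/-- The Frobenius norm of a real matrix. -/
noncomputable def frob {α β : Type*} [Fintype α] [Fintype β] (M : Matrix α β ℝ) : ℝ :=
  Real.sqrt (∑ i, ∑ j, M i j ^ 2)

/-- Vertical stacking `[M₀; M₁; M₂; M₃]` of the four real components of a reduced
biquaternion matrix. -/
def stack {m : ℕ} {β : Type*} (M : Fin 4 → Matrix (Fin m) β ℝ) :
    Matrix (Fin 4 × Fin m) β ℝ :=
  Matrix.of fun p j => M p.1 p.2 j

/-- The Frobenius norm `(Σ_t ‖E_t‖_F² + Σ_t ‖G_t‖_F²)^{1/2}` of the reduced biquaternion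
matrix `[Ê, Ĝ]` with components `E_t`, `G_t`. -/
noncomputable def objRB {m n d : ℕ}
    (E : Fin 4 → Matrix (Fin m) (Fin n) ℝ) (G : Fin 4 → Matrix (Fin m) (Fin d) ℝ) : ℝ :=
  Real.sqrt ((∑ t, ∑ i, ∑ j, E t i j ^ 2) + (∑ t, ∑ i, ∑ j, G t i j ^ 2))

/-- Componentwise feasibility for the RBTLS problem:
`(A_t + E_t) X = B_t + G_t` for `t = 0,1,2,3`. -/
def feasRB {m n d : ℕ}
    (A : Fin 4 → Matrix (Fin m) (Fin n) ℝ) (B : Fin 4 → Matrix (Fin m) (Fin d) ℝ)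
    (E : Fin 4 → Matrix (Fin m) (Fin n) ℝ) (G : Fin 4 → Matrix (Fin m) (Fin d) ℝ)
    (X : Matrix (Fin n) (Fin d) ℝ) : Prop :=
  ∀ t, (A t + E t) * X = B t + G t

/-- `X` is an RBTLS solution: some feasible reduced biquaternion perturbation `(E, G)`
attains the minimum of the objective over all feasible data. -/
def isRBTLSSol {m n d : ℕ}
    (A : Fin 4 → Matrix (Fin m) (Fin n) ℝ) (B : Fin 4 → Matrix (Fin m) (Fin d) ℝ)
    (X : Matrix (Fin n) (Fin d) ℝ) : Prop :=
  ∃ E G, feasRB A B E G X ∧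
    ∀ E' G' (X' : Matrix (Fin n) (Fin d) ℝ),
      feasRB A B E' G' X' → objRB E G ≤ objRB E' G'

/-- Feasibility for the real TLS problem: `(C + Ẽ) X = D + G̃`. -/
def feasTLS {n d : ℕ} {α : Type*} [Fintype α]
    (C : Matrix α (Fin n) ℝ) (D : Matrix α (Fin d) ℝ)
    (Et : Matrix α (Fin n) ℝ) (Gt : Matrix α (Fin d) ℝ)
    (X : Matrix (Fin n) (Fin d) ℝ) : Prop :=
  (C + Et) * X = D + Gt

/-- `X` is a real TLS solution: some feasible real perturbation `(Ẽ, G̃)` attains the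
minimum of `‖[Ẽ, G̃]‖_F` over all feasible data. -/
def isTLSSol {n d : ℕ} {α : Type*} [Fintype α]
    (C : Matrix α (Fin n) ℝ) (D : Matrix α (Fin d) ℝ)
    (X : Matrix (Fin n) (Fin d) ℝ) : Prop :=
  ∃ Et Gt, feasTLS C D Et Gt X ∧
    ∀ Et' Gt' (X' : Matrix (Fin n) (Fin d) ℝ),
      feasTLS C D Et' Gt' X' → frob (fromCols Et Gt) ≤ frob (fromCols Et' Gt')

lemma unstack_stack {m : ℕ} {β : Type*} (M : Matrix (Fin 4 × Fin m) β ℝ) :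
    stack (fun t => Matrix.of fun i j => M (t, i) j) = M := by
  ext ⟨t, i⟩ j; rfl

lemma stack_add {m : ℕ} {β : Type*} (M N : Fin 4 → Matrix (Fin m) β ℝ) :
    stack (fun t => M t + N t) = stack M + stack N := by
  ext ⟨t, i⟩ j; rfl

lemma stack_mul {m n d : ℕ} (M : Fin 4 → Matrix (Fin m) (Fin n) ℝ)
    (X : Matrix (Fin n) (Fin d) ℝ) :
    stack (fun t => M t * X) = stack M * X := by
  ext ⟨t, i⟩ j
  simp [stack, Matrix.mul_apply]

lemma stack_inj {m : ℕ} {β : Type*} {M N : Fin 4 → Matrix (Fin m) β ℝ}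
    (h : stack M = stack N) : M = N := by
  funext t; ext i j
  exact congrFun (congrFun h (t, i)) j

lemma obj_eq {m n d : ℕ} (E : Fin 4 → Matrix (Fin m) (Fin n) ℝ)
    (G : Fin 4 → Matrix (Fin m) (Fin d) ℝ) :
    objRB E G = frob (fromCols (stack E) (stack G)) := by
  unfold objRB frob
  congr 1
  simp [Matrix.fromCols, stack, Fintype.sum_prod_type, Fintype.sum_sum_type,
    Finset.sum_add_distrib]

lemma feas_eq {m n d : ℕ}
    (A : Fin 4 → Matrix (Fin m) (Fin n) ℝ) (B : Fin 4 → Matrix (Fin m) (Fin d) ℝ)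
    (E : Fin 4 → Matrix (Fin m) (Fin n) ℝ) (G : Fin 4 → Matrix (Fin m) (Fin d) ℝ)
    (X' : Matrix (Fin n) (Fin d) ℝ) :
    feasRB A B E G X' ↔ feasTLS (stack A) (stack B) (stack E) (stack G) X' := by
  unfold feasRB feasTLS
  constructor
  · intro h
    rw [← stack_add, ← stack_add, ← stack_mul]
    exact congrArg stack (funext h)
  · intro h t
    rw [← stack_add, ← stack_add, ← stack_mul] at h
    exact congrFun (stack_inj h) t

/-- a real matrix `X` is an RBTLS solution if and only if it is a real TLS
solution for the stacked data `C = [A₀; A₁; A₂; A₃]`, `D = [B₀; B₁; B₂; B₃]`; moreover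
the correspondence `Ẽ = [E₀; E₁; E₂; E₃]`, `G̃ = [G₀; G₁; G₂; G₃]` preserves the
objective value (`‖[Ê, Ĝ]‖_F = ‖[Ẽ, G̃]‖_F`) and feasibility. -/
theorem rbtls_iff_tls {m n d : ℕ}
    (A : Fin 4 → Matrix (Fin m) (Fin n) ℝ) (B : Fin 4 → Matrix (Fin m) (Fin d) ℝ)
    (X : Matrix (Fin n) (Fin d) ℝ) :
    (isRBTLSSol A B X ↔ isTLSSol (stack A) (stack B) X) ∧
    (∀ (E : Fin 4 → Matrix (Fin m) (Fin n) ℝ) (G : Fin 4 → Matrix (Fin m) (Fin d) ℝ),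
      objRB E G = frob (fromCols (stack E) (stack G))) ∧
    (∀ (E : Fin 4 → Matrix (Fin m) (Fin n) ℝ) (G : Fin 4 → Matrix (Fin m) (Fin d) ℝ)
      (X' : Matrix (Fin n) (Fin d) ℝ),
      feasRB A B E G X' ↔ feasTLS (stack A) (stack B) (stack E) (stack G) X') := by
  refine ⟨?_, obj_eq, fun E G X' => feas_eq A B E G X'⟩
  constructor
  · rintro ⟨E, G, hfeas, hmin⟩
    refine ⟨stack E, stack G, (feas_eq A B E G X).1 hfeas, ?_⟩
    intro Et' Gt' X' hfeas'
    set E' : Fin 4 → Matrix (Fin m) (Fin n) ℝ := fun t => Matrix.of fun i j => Et' (t, i) j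
    set G' : Fin 4 → Matrix (Fin m) (Fin d) ℝ := fun t => Matrix.of fun i j => Gt' (t, i) j
    have hE' : stack E' = Et' := unstack_stack Et'
    have hG' : stack G' = Gt' := unstack_stack Gt'
    have hf : feasRB A B E' G' X' := by
      rw [feas_eq, hE', hG']; exact hfeas'
    calc frob (fromCols (stack E) (stack G)) = objRB E G := (obj_eq E G).symm
      _ ≤ objRB E' G' := hmin E' G' X' hf
      _ = frob (fromCols Et' Gt') := by rw [obj_eq, hE', hG']
  · rintro ⟨Et, Gt, hfeas, hmin⟩
    set E : Fin 4 → Matrix (Fin m) (Fin n) ℝ := fun t => Matrix.of fun i j => Et (t, i) j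
    set G : Fin 4 → Matrix (Fin m) (Fin d) ℝ := fun t => Matrix.of fun i j => Gt (t, i) j
    have hE : stack E = Et := unstack_stack Et
    have hG : stack G = Gt := unstack_stack Gt
    refine ⟨E, G, by rw [feas_eq, hE, hG]; exact hfeas, ?_⟩
    intro E' G' X' hf
    calc objRB E G = frob (fromCols Et Gt) := by rw [obj_eq, hE, hG]
      _ ≤ frob (fromCols (stack E') (stack G')) :=
          hmin _ _ X' ((feas_eq A B E' G' X').1 hf)
      _ = objRB E' G' := (obj_eq E' G').symm
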